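/- Define I_p(x) = x·log(x/p) + (1−x)·log((1−x)/(1−p)) for x ∈ [0,1] (with the limiting values at 0 and 1). Then for x ∈ [0,p], I_p(p − x) ≥ I_p(p + x). -/

import Mathlib

/-- The relative entropy I_p(x) = x log(x/p) + (1-x) log((1-x)/(1-p)); with Lean's
conventions log 0 = 0 and 0 * log 0 = 0 this gives the correct limiting values at 0 and 1. -/
noncomputable def Ip (p x : ℝ) : ℝ :=
  x * Real.log (x / p) + (1 - x) * Real.log ((1 - x) / (1 - p))

lemma mul_log_div' (y q : ℝ) (hq : q ≠ 0) :
    y * Real.log (y / q) = y * Real.log y - y * Real.log q := by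
  rcases eq_or_ne y 0 with rfl | hy
  · simp
  · rw [Real.log_div hy hq]; ring

lemma Ip_eq (p : ℝ) (hp : p ≠ 0) (hp1 : (1:ℝ) - p ≠ 0) (x : ℝ) :
    Ip p x = x * Real.log x + (1 - x) * Real.log (1 - x)
      - x * Real.log p - (1 - x) * Real.log (1 - p) := by
  unfold Ip
  rw [mul_log_div' x p hp, mul_log_div' (1 - x) (1 - p) hp1]
  ring

lemma Ip_continuous (p : ℝ) (hp : p ≠ 0) (hp1 : (1:ℝ) - p ≠ 0) :
    Continuous (Ip p) := by
  have hfun : Ip p = fun x => x * Real.log x + (1 - x) * Real.log (1 - x)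
      - x * Real.log p - (1 - x) * Real.log (1 - p) :=
    funext fun x => Ip_eq p hp hp1 x
  rw [hfun]
  have h1 : Continuous fun x : ℝ => x * Real.log x := Real.continuous_mul_log
  have h2 : Continuous fun x : ℝ => (1 - x) * Real.log (1 - x) :=
    h1.comp (continuous_const.sub continuous_id)
  exact ((h1.add h2).sub (continuous_id.mul continuous_const)).sub
    ((continuous_const.sub continuous_id).mul continuous_const)

lemma Ip_hasDerivAt (p y : ℝ) (hp : p ≠ 0) (hp1 : (1:ℝ) - p ≠ 0)
    (hy : y ≠ 0) (hy1 : (1:ℝ) - y ≠ 0) :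
    HasDerivAt (Ip p)
      (Real.log y - Real.log (1 - y) - Real.log p + Real.log (1 - p)) y := by
  have h1 : HasDerivAt (fun t : ℝ => t * Real.log t) (Real.log y + 1) y :=
    Real.hasDerivAt_mul_log hy
  have h2' : HasDerivAt (fun t : ℝ => (1 - t)) (-1 : ℝ) y := by
    simpa using (hasDerivAt_id y).const_sub (1:ℝ)
  have h2 : HasDerivAt (fun t : ℝ => (1 - t) * Real.log (1 - t))
      ((Real.log (1 - y) + 1) * (-1)) y :=
    (Real.hasDerivAt_mul_log hy1).comp y h2'
  have h3 : HasDerivAt (fun t : ℝ => t * Real.log p) (Real.log p) y := by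
    simpa using (hasDerivAt_id y).mul_const (Real.log p)
  have h4 : HasDerivAt (fun t : ℝ => (1 - t) * Real.log (1 - p))
      ((-1) * Real.log (1 - p)) y := h2'.mul_const (Real.log (1 - p))
  have h : HasDerivAt (fun t : ℝ => t * Real.log t + (1 - t) * Real.log (1 - t)
      - t * Real.log p - (1 - t) * Real.log (1 - p)) _ y := ((h1.add h2).sub h3).sub h4
  have heq : (fun t : ℝ => t * Real.log t + (1 - t) * Real.log (1 - t)
      - t * Real.log p - (1 - t) * Real.log (1 - p)) = Ip p := by
    funext t; rw [Ip_eq p hp hp1 t]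
  rw [heq] at h
  convert h using 1
  ring

/-- For 0 < p < 1/2 and x ∈ [0, p], I_p(p - x) ≥ I_p(p + x). -/
theorem Ip_sub_ge_Ip_add (p : ℝ) (hp : 0 < p) (hp' : p < 1 / 2)
    (x : ℝ) (hx : x ∈ Set.Icc (0 : ℝ) p) :
    Ip p (p + x) ≤ Ip p (p - x) := by
  obtain ⟨hx0, hxp⟩ := hx
  have hpne : p ≠ 0 := ne_of_gt hp
  have hp1 : (1:ℝ) - p ≠ 0 := by intro h; linarith [h]
  have hp1pos : 0 < 1 - p := by linarith
  set g : ℝ → ℝ := fun t => Ip p (p - t) - Ip p (p + t) with hgdef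
  -- continuity
  have hIc : Continuous (Ip p) := Ip_continuous p hpne hp1
  have hcont : Continuous g :=
    (hIc.comp (continuous_const.sub continuous_id)).sub
      (hIc.comp (continuous_const.add continuous_id))
  -- derivative on the interior
  have hderiv : ∀ t ∈ Set.Ioo (0:ℝ) p, HasDerivAt g
      ((Real.log (p - t) - Real.log (1 - (p - t)) - Real.log p + Real.log (1 - p)) * (-1)
        - (Real.log (p + t) - Real.log (1 - (p + t)) - Real.log p + Real.log (1 - p)) * 1) t := by
    intro t ht
    obtain ⟨ht0, htp⟩ := ht
    have hsub : HasDerivAt (fun s : ℝ => p - s) (-1 : ℝ) t := by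
      simpa using (hasDerivAt_id t).const_sub p
    have hadd : HasDerivAt (fun s : ℝ => p + s) (1 : ℝ) t := by
      simpa using (hasDerivAt_id t).const_add p
    have h1 : HasDerivAt (fun s : ℝ => Ip p (p - s))
        ((Real.log (p - t) - Real.log (1 - (p - t)) - Real.log p + Real.log (1 - p)) * (-1)) t :=
      (Ip_hasDerivAt p (p - t) hpne hp1 (by linarith : (0:ℝ) < p - t).ne'
        (by nlinarith : (0:ℝ) < 1 - (p - t)).ne').comp t hsub
    have h2 : HasDerivAt (fun s : ℝ => Ip p (p + s))
        ((Real.log (p + t) - Real.log (1 - (p + t)) - Real.log p + Real.log (1 - p)) * 1) t :=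
      (Ip_hasDerivAt p (p + t) hpne hp1 (by linarith : (0:ℝ) < p + t).ne'
        (by nlinarith : (0:ℝ) < 1 - (p + t)).ne').comp t hadd
    exact h1.sub h2
  have hmono : MonotoneOn g (Set.Icc 0 p) := by
    apply monotoneOn_of_deriv_nonneg (convex_Icc 0 p) hcont.continuousOn
    · intro t ht
      rw [interior_Icc] at ht
      exact ((hderiv t ht).differentiableAt).differentiableWithinAt
    · intro t ht
      rw [interior_Icc] at ht
      obtain ⟨ht0, htp⟩ := ht
      rw [(hderiv t ⟨ht0, htp⟩).deriv]
      have hA : (0:ℝ) < p - t := by linarith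
      have hB : (0:ℝ) < p + t := by linarith
      have hC : (0:ℝ) < 1 - p + t := by linarith
      have hD : (0:ℝ) < 1 - p - t := by linarith
      have key : Real.log (p - t) + Real.log (p + t) + 2 * Real.log (1 - p)
          ≤ Real.log (1 - p + t) + Real.log (1 - p - t) + 2 * Real.log p := by
        have hL : Real.log (p - t) + Real.log (p + t) + 2 * Real.log (1 - p)
            = Real.log ((p - t) * (p + t) * ((1 - p) * (1 - p))) := by
          rw [Real.log_mul (by positivity) (by positivity),
            Real.log_mul hA.ne' hB.ne', Real.log_mul hp1pos.ne' hp1pos.ne']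
          ring
        have hR : Real.log (1 - p + t) + Real.log (1 - p - t) + 2 * Real.log p
            = Real.log ((1 - p + t) * (1 - p - t) * (p * p)) := by
          rw [Real.log_mul (by positivity) (by positivity),
            Real.log_mul hC.ne' hD.ne', Real.log_mul hpne hpne]
          ring
        rw [hL, hR]
        apply Real.log_le_log (by positivity)
        nlinarith [sq_nonneg t, mul_nonneg (sq_nonneg t) (by nlinarith : (0:ℝ) ≤ (1 - p)^2 - p^2)]
      have : 1 - (p - t) = 1 - p + t := by ring
      rw [this]
      have : 1 - (p + t) = 1 - p - t := by ring
      rw [this]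
      linarith
  have h0 : g 0 ≤ g x := hmono (Set.mem_Icc.mpr ⟨le_refl 0, hp.le⟩) (Set.mem_Icc.mpr ⟨hx0, hxp⟩) hx0
  have hg0 : g 0 = 0 := by simp [hgdef]
  have : 0 ≤ Ip p (p - x) - Ip p (p + x) := by rw [hg0] at h0; exact h0
  linarith
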